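/- arXiv:2411.10387 — 7 statements merged into one kernel-verified Lean document; each statement's English description precedes it below -/
import Mathlib

section
/- Let m, γ : {1,…,N} → ℝ with m_n > 0 and γ_n > 0 for all n, let B be a real N×L matrix, and let W be a real L×L diagonal matrix with strictly positive diagonal entries; set L₀ = B W Bᵀ. If λ ∈ ℂ and v ∈ ℂ^N is nonzero with (λ² · diag(m) + λ · diag(γ) + L₀) v = 0, then either Re(λ) < 0, or λ = 0 and Bᵀ v = 0. (This establishes linear stability, transverse to the kernel of Bᵀ, of phase-locked states of the Kuramoto model with inertia m_n ẍ_n + γ_n ẋ_n = P_n − Σ_m a_{nm} K_{nm} sin(x_n − x_m) whenever m_n > 0, γ_n > 0, and K_{nm} cos(x_n° − x_m°) > 0 on every edge.) -/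
open Matrix

private lemma diag_quad {N : ℕ} (d : Fin N → ℝ) (v : Fin N → ℂ) :
    star v ⬝ᵥ ((Matrix.diagonal fun n => (d n : ℂ)) *ᵥ v)
      = ((∑ n, d n * Complex.normSq (v n) : ℝ) : ℂ) := by
  simp only [dotProduct, mulVec_diagonal, Complex.ofReal_sum, Complex.ofReal_mul]
  refine Finset.sum_congr rfl fun n _ => ?_
  have : (starRingEnd ℂ) (v n) * v n = (Complex.normSq (v n) : ℂ) :=
    Complex.normSq_eq_conj_mul_self.symm
  simp only [Pi.star_apply, Complex.star_def]
  rw [mul_comm ((starRingEnd ℂ) (v n)), mul_assoc, Complex.mul_conj]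

private lemma quad_roots {a b c : ℝ} (ha : 0 < a) (hb : 0 < b) (hc : 0 ≤ c)
    (lam : ℂ) (h : lam ^ 2 * a + lam * b + c = 0) :
    lam.re < 0 ∨ (lam = 0 ∧ c = 0) := by
  set x := lam.re with hx
  set y := lam.im with hy
  have him : a * (2 * x * y) + b * y = 0 := by
    have := congrArg Complex.im h
    simp [Complex.add_im, Complex.mul_im, pow_two, Complex.mul_re, Complex.mul_im,
      Complex.ofReal_im, Complex.ofReal_re] at this
    nlinarith [this]
  have hre : a * (x ^ 2 - y ^ 2) + b * x + c = 0 := by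
    have := congrArg Complex.re h
    simp [Complex.add_re, pow_two, Complex.mul_re, Complex.mul_im,
      Complex.ofReal_im, Complex.ofReal_re] at this
    nlinarith [this]
  have hfac : y * (2 * a * x + b) = 0 := by nlinarith [him]
  rcases mul_eq_zero.1 hfac with hy0 | hx0
  · -- y = 0 : real equation a x² + b x + c = 0
    have hreal : a * x ^ 2 + b * x + c = 0 := by
      rw [hy0] at hre; ring_nf at hre ⊢; linarith
    rcases lt_trichotomy x 0 with h1 | h1 | h1
    · exact Or.inl h1
    · right
      constructor
      · exact Complex.ext (by simpa using h1.symm ▸ rfl) (by simpa using hy0)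
      · nlinarith [hreal]
    · exfalso; nlinarith [hreal, mul_pos ha (mul_pos h1 h1)]
  · left
    have : x = -b / (2 * a) := by
      field_simp
      linarith [hx0]
    rw [this]
    exact div_neg_of_neg_of_pos (by linarith) (by linarith)

/-- Quadratic eigenvalue problem for the Kuramoto model with
inertia.  With `m_n > 0`, `γ_n > 0`, and `L₀ = B W Bᵀ` for a positive diagonal
weight matrix `W`, every solution `(λ, v)`, `v ≠ 0`, of
`(λ² diag m + λ diag γ + L₀) v = 0` satisfies `Re λ < 0`, or `λ = 0` and
`Bᵀ v = 0`. -/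
theorem kuramoto_inertia_quadratic_stability {N L : ℕ}
    (m γ : Fin N → ℝ) (hm : ∀ n, 0 < m n) (hγ : ∀ n, 0 < γ n)
    (B : Matrix (Fin N) (Fin L) ℝ)
    (w : Fin L → ℝ) (hw : ∀ l, 0 < w l)
    (lam : ℂ) (v : Fin N → ℂ) (hv : v ≠ 0)
    (heig :
      (lam ^ 2 • Matrix.diagonal (fun n => (m n : ℂ)) +
       lam • Matrix.diagonal (fun n => (γ n : ℂ)) +
       (B * Matrix.diagonal w * Bᵀ).map (fun x : ℝ => (x : ℂ))) *ᵥ v = 0) :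
    lam.re < 0 ∨ (lam = 0 ∧ (Bᵀ.map fun x : ℝ => (x : ℂ)) *ᵥ v = 0) := by
  classical
  set Bc : Matrix (Fin N) (Fin L) ℂ := B.map (fun x : ℝ => (x : ℂ)) with hBc
  set u : Fin L → ℂ := Bcᵀ *ᵥ v with hu
  -- the three scalar quantities
  set a : ℝ := ∑ n, m n * Complex.normSq (v n) with ha_def
  set b : ℝ := ∑ n, γ n * Complex.normSq (v n) with hb_def
  set c : ℝ := ∑ l, w l * Complex.normSq (u l) with hc_def
  -- rewrite the coefficient matrix map
  have hmapcoe : (fun x : ℝ => (x : ℂ)) = ⇑Complex.ofRealHom := rfl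
  have hL0 : (B * Matrix.diagonal w * Bᵀ).map (fun x : ℝ => (x : ℂ))
      = Bc * Matrix.diagonal (fun l => (w l : ℂ)) * Bcᵀ := by
    rw [hmapcoe, Matrix.map_mul, Matrix.map_mul, Matrix.transpose_map,
      Matrix.diagonal_map (by simp)]
    rfl
  -- take inner product with star v
  have hdot : star v ⬝ᵥ ((lam ^ 2 • Matrix.diagonal (fun n => (m n : ℂ)) +
       lam • Matrix.diagonal (fun n => (γ n : ℂ)) +
       (B * Matrix.diagonal w * Bᵀ).map (fun x : ℝ => (x : ℂ))) *ᵥ v) = 0 := by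
    rw [heig]; simp
  have hsu : star u = star v ᵥ* Bc := by
    have hBH : Bcᵀᴴ = Bc := by
      ext i j
      simp [hBc, Matrix.conjTranspose_apply]
    rw [hu, star_mulVec, hBH]
  have hC : star v ⬝ᵥ ((B * Matrix.diagonal w * Bᵀ).map (fun x : ℝ => (x : ℂ)) *ᵥ v)
      = (c : ℂ) := by
    rw [hL0, ← Matrix.mulVec_mulVec, ← Matrix.mulVec_mulVec, dotProduct_mulVec, ← hsu,
      ← hu]
    exact diag_quad w u
  have key : lam ^ 2 * a + lam * b + c = 0 := by
    have := hdot
    rw [Matrix.add_mulVec, Matrix.add_mulVec, Matrix.smul_mulVec,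
      Matrix.smul_mulVec, dotProduct_add, dotProduct_add,
      dotProduct_smul, dotProduct_smul, diag_quad m v, diag_quad γ v, hC] at this
    simpa [smul_eq_mul, ha_def, hb_def, mul_comm] using this
  -- positivity
  obtain ⟨n0, hn0⟩ : ∃ n, v n ≠ 0 := by
    by_contra h
    push_neg at h
    exact hv (funext h)
  have hvpos : 0 < Complex.normSq (v n0) := Complex.normSq_pos.2 hn0
  have ha : 0 < a := Finset.sum_pos'
    (fun n _ => mul_nonneg (hm n).le (Complex.normSq_nonneg _))
    ⟨n0, Finset.mem_univ _, mul_pos (hm n0) hvpos⟩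
  have hb : 0 < b := Finset.sum_pos'
    (fun n _ => mul_nonneg (hγ n).le (Complex.normSq_nonneg _))
    ⟨n0, Finset.mem_univ _, mul_pos (hγ n0) hvpos⟩
  have hc : 0 ≤ c := Finset.sum_nonneg
    (fun l _ => mul_nonneg (hw l).le (Complex.normSq_nonneg _))
  rcases quad_roots ha hb hc lam key with h | ⟨hlam, hc0⟩
  · exact Or.inl h
  · refine Or.inr ⟨hlam, ?_⟩
    -- c = 0 forces u = 0
    have hu0 : ∀ l, u l = 0 := by
      intro l
      have hterm : ∀ l' ∈ Finset.univ, 0 ≤ w l' * Complex.normSq (u l') :=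
        fun l' _ => mul_nonneg (hw l').le (Complex.normSq_nonneg _)
      rw [hc_def] at hc0
      have hz : w l * Complex.normSq (u l) = 0 :=
        (Finset.sum_eq_zero_iff_of_nonneg hterm).1 hc0 l (Finset.mem_univ _)
      have := (mul_eq_zero.1 hz).resolve_left (hw l).ne'
      exact Complex.normSq_eq_zero.1 this
    have : u = 0 := funext hu0
    rw [hu, hBc] at this
    rw [Matrix.transpose_map]
    exact this
end

section
/- Let B be a real N×L matrix, let c : {1,…,L} → ℝ with c_l > 0 for all l, and let δ : {1,…,L} → ℝ satisfy cos(2 δ_l) > 0 for all l. Define the real (N+L)×(N+L) block matrix J with blocks J₁₁ = −B · diag(cos²(δ_l)/c_l) · Bᵀ, J₁₂ = −B · diag(sin δ_l), J₂₁ = −diag(sin δ_l) · Bᵀ, J₂₂ = −diag(c_l). Then J is symmetric and negative semidefinite: xᵀ J x ≤ 0 for all x ∈ ℝ^{N+L}. (J is the Jacobian of the adaptive Kuramoto model ẋ_n = ψ_n − Σ_m A_{nm} sin(x_n − x_m), Ȧ_{nm} = cos(x_n − x_m) − c_{nm} A_{nm} at a phase-locked state with steady phase differences δ_l across the edges; the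 condition cos(2δ_l) > 0 is equivalent to |δ_l| < π/4 modulo π.) -/
open Matrix Real

/-- The Jacobian of the adaptive Kuramoto model at a phase-locked state with
edge phase differences `δ` and adaptation rates `c`. -/
noncomputable def adaptiveKuramotoJacobian {N L : ℕ} (B : Matrix (Fin N) (Fin L) ℝ)
    (c δ : Fin L → ℝ) : Matrix (Fin N ⊕ Fin L) (Fin N ⊕ Fin L) ℝ :=
  Matrix.fromBlocks
    (-(B * Matrix.diagonal (fun l => Real.cos (δ l) ^ 2 / c l) * Bᵀ))
    (-(B * Matrix.diagonal (fun l => Real.sin (δ l))))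
    (-(Matrix.diagonal (fun l => Real.sin (δ l)) * Bᵀ))
    (-Matrix.diagonal c)

lemma negKuramoto_posSemidef {N L : ℕ} (B : Matrix (Fin N) (Fin L) ℝ)
    (c δ : Fin L → ℝ) (hc : ∀ l, 0 < c l) (hδ : ∀ l, 0 < Real.cos (2 * δ l)) :
    (-(adaptiveKuramotoJacobian B c δ)).PosSemidef := by
  have hH : (B * Matrix.diagonal fun l => Real.sin (δ l))ᴴ =
      Matrix.diagonal (fun l => Real.sin (δ l)) * Bᵀ := by
    ext i j
    rw [Matrix.conjTranspose_apply, Matrix.mul_diagonal, Matrix.diagonal_mul,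
      Matrix.transpose_apply]
    simp [mul_comm]
  have hJ : -(adaptiveKuramotoJacobian B c δ) =
      Matrix.fromBlocks
        (B * Matrix.diagonal (fun l => Real.cos (δ l) ^ 2 / c l) * Bᵀ)
        (B * Matrix.diagonal (fun l => Real.sin (δ l)))
        ((B * Matrix.diagonal (fun l => Real.sin (δ l)))ᴴ)
        (Matrix.diagonal c) := by
    rw [adaptiveKuramotoJacobian, Matrix.fromBlocks_neg]
    simp [hH]
  rw [hJ]
  have hD : (Matrix.diagonal c).PosDef := Matrix.posDef_diagonal_iff.mpr hc
  haveI : Invertible (Matrix.diagonal c) :=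
    Matrix.invertibleOfIsUnitDet _ (by
      rw [Matrix.det_diagonal]
      exact (Finset.prod_pos (fun l _ => hc l)).ne'.isUnit)
  rw [Matrix.PosDef.fromBlocks₂₂ _ _ hD]
  have hinv : (Matrix.diagonal c)⁻¹ = Matrix.diagonal fun l => (c l)⁻¹ := by
    apply Matrix.inv_eq_right_inv
    rw [Matrix.diagonal_mul_diagonal]
    have : (fun l => c l * (c l)⁻¹) = fun _ => (1 : ℝ) :=
      funext fun l => mul_inv_cancel₀ (hc l).ne'
    rw [this, Matrix.diagonal_one]
  have hBH : Bᴴ = Bᵀ := by ext i j; simp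
  have hsd : (star fun l => Real.sin (δ l)) = fun l => Real.sin (δ l) :=
    funext fun l => star_trivial _
  have key : B * Matrix.diagonal (fun l => Real.cos (δ l) ^ 2 / c l) * Bᵀ -
      B * Matrix.diagonal (fun l => Real.sin (δ l)) * (Matrix.diagonal c)⁻¹ *
        (B * Matrix.diagonal (fun l => Real.sin (δ l)))ᴴ =
      B * Matrix.diagonal (fun l => Real.cos (2 * δ l) / c l) * Bᴴ := by
    rw [hinv, Matrix.conjTranspose_mul, Matrix.diagonal_conjTranspose, hsd]
    simp only [hBH]
    have h2 : B * Matrix.diagonal (fun l => Real.sin (δ l)) *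
        Matrix.diagonal (fun l => (c l)⁻¹) *
        (Matrix.diagonal (fun l => Real.sin (δ l)) * Bᵀ) =
        B * Matrix.diagonal (fun l => Real.sin (δ l) * (c l)⁻¹ * Real.sin (δ l)) * Bᵀ := by
      rw [Matrix.mul_assoc B (Matrix.diagonal _) (Matrix.diagonal _),
        Matrix.diagonal_mul_diagonal,
        ← Matrix.mul_assoc _ (Matrix.diagonal _) Bᵀ,
        Matrix.mul_assoc B (Matrix.diagonal _) (Matrix.diagonal _),
        Matrix.diagonal_mul_diagonal]
    rw [h2, ← Matrix.sub_mul, ← Matrix.mul_sub, Matrix.diagonal_sub]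
    have hfg : (fun i => Real.cos (δ i) ^ 2 / c i - Real.sin (δ i) * (c i)⁻¹ * Real.sin (δ i)) =
        fun l => Real.cos (2 * δ l) / c l := by
      funext l
      have h1 := Real.sin_sq_add_cos_sq (δ l)
      have hct : Real.cos (2 * δ l) = 2 * Real.cos (δ l) ^ 2 - 1 := Real.cos_two_mul (δ l)
      have hcl := (hc l).ne'
      have hcs : Real.cos (2 * δ l) = Real.cos (δ l) ^ 2 - Real.sin (δ l) * Real.sin (δ l) := by
        nlinarith [h1, hct]

      rw [hcs]
      field_simp
    rw [hfg]
  rw [key]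
  exact (Matrix.posSemidef_diagonal_iff.mpr fun l =>
    div_nonneg (hδ l).le (hc l).le).mul_mul_conjTranspose_same B

/-- If `c_l > 0` and `cos (2 δ_l) > 0` for all edges, the Jacobian
of the adaptive Kuramoto model is symmetric and negative semidefinite. -/
theorem adaptiveKuramotoJacobian_negSemidef {N L : ℕ} (B : Matrix (Fin N) (Fin L) ℝ)
    (c δ : Fin L → ℝ) (hc : ∀ l, 0 < c l) (hδ : ∀ l, 0 < Real.cos (2 * δ l)) :
    (adaptiveKuramotoJacobian B c δ).IsSymm ∧
    ∀ x : Fin N ⊕ Fin L → ℝ, x ⬝ᵥ ((adaptiveKuramotoJacobian B c δ) *ᵥ x) ≤ 0 := by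
  have hP := negKuramoto_posSemidef B c δ hc hδ
  constructor
  · have h := hP.1
    rw [Matrix.IsHermitian] at h
    have hJH : (adaptiveKuramotoJacobian B c δ)ᴴ = adaptiveKuramotoJacobian B c δ := by
      have := congrArg Neg.neg h
      simpa using this
    have h2 : (adaptiveKuramotoJacobian B c δ)ᴴ = (adaptiveKuramotoJacobian B c δ)ᵀ := by
      ext i j; simp [Matrix.conjTranspose_apply]
    rw [Matrix.IsSymm, ← h2]
    exact hJH
  · intro x
    have h := hP.dotProduct_mulVec_nonneg x
    rw [Matrix.neg_mulVec, dotProduct_neg] at h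
    have hs : star x = x := by funext i; simp
    rw [hs] at h
    linarith
end

section
/- Let B be a real N×L matrix, let c : {1,…,L} → ℝ with c_l > 0 for all l, and let δ : {1,…,L} → ℝ satisfy cos(2 δ_l) > 0 for all l. Define the real (N+L)×(N+L) block matrix J with blocks J₁₁ = −B · diag(cos²(δ_l)/c_l) · Bᵀ, J₁₂ = −B · diag(sin δ_l), J₂₁ = −diag(sin δ_l) · Bᵀ, J₂₂ = −diag(c_l). Then the kernel of J is exactly { (x, a) ∈ ℝ^N × ℝ^L : Bᵀ x = 0 and a = 0 }. Combined with negative semidefiniteness of J, every nonzero eigenvalue of J is a strictly negative real number, so the phase-locked state is linearly stable transverse to the kernel of Bᵀ. -/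
open Matrix Real

/-- Quadratic form expansion for block matrices of the Jacobian shape. -/
lemma quad_expand {n l : Type*} [Fintype n] [Fintype l] [DecidableEq l]
    {K : Type*} [CommRing K] [StarRing K]
    (B : Matrix n l K) (hB : Bᵀᴴ = B) (d s e : l → K) (x : n → K) (a : l → K) :
    star (Sum.elim x a) ⬝ᵥ
      ((Matrix.fromBlocks (-(B * Matrix.diagonal d * Bᵀ)) (-(B * Matrix.diagonal s))
        (-(Matrix.diagonal s * Bᵀ)) (-Matrix.diagonal e)) *ᵥ Sum.elim x a)
    = -∑ i, (star ((Bᵀ *ᵥ x) i) * (d i * (Bᵀ *ᵥ x) i)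
        + star ((Bᵀ *ᵥ x) i) * (s i * a i)
        + star (a i) * (s i * (Bᵀ *ᵥ x) i)
        + star (a i) * (e i * a i)) := by
  set y := Bᵀ *ᵥ x with hy
  have hstar : star (Sum.elim x a) = Sum.elim (star x) (star a) := by
    funext i; cases i <;> rfl
  have hxy : star x ᵥ* B = star y := by
    rw [hy, star_mulVec, hB]
  rw [Matrix.fromBlocks_mulVec, hstar, sumElim_dotProduct_sumElim]
  simp only [Sum.elim_comp_inl, Sum.elim_comp_inr]
  rw [Matrix.neg_mulVec, Matrix.neg_mulVec, Matrix.neg_mulVec, Matrix.neg_mulVec]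
  rw [dotProduct_add, dotProduct_add,
    dotProduct_neg, dotProduct_neg, dotProduct_neg, dotProduct_neg]
  have h1 : star x ⬝ᵥ ((B * Matrix.diagonal d * Bᵀ) *ᵥ x)
      = ∑ i, star (y i) * (d i * y i) := by
    rw [← Matrix.mulVec_mulVec, ← Matrix.mulVec_mulVec, dotProduct_mulVec, hxy]
    simp [dotProduct, Matrix.mulVec_diagonal, ← hy]
  have h2 : star x ⬝ᵥ ((B * Matrix.diagonal s) *ᵥ a)
      = ∑ i, star (y i) * (s i * a i) := by
    rw [← Matrix.mulVec_mulVec, dotProduct_mulVec, hxy]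
    simp [dotProduct, Matrix.mulVec_diagonal]
  have h3 : star a ⬝ᵥ ((Matrix.diagonal s * Bᵀ) *ᵥ x)
      = ∑ i, star (a i) * (s i * y i) := by
    rw [← Matrix.mulVec_mulVec, ← hy]
    simp [dotProduct, Matrix.mulVec_diagonal]
  have h4 : star a ⬝ᵥ (Matrix.diagonal e *ᵥ a)
      = ∑ i, star (a i) * (e i * a i) := by
    simp [dotProduct, Matrix.mulVec_diagonal]
  rw [h1, h2, h3, h4]
  rw [Finset.sum_add_distrib, Finset.sum_add_distrib, Finset.sum_add_distrib]
  ring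

/-- Positivity of the edgewise quadratic form. -/
lemma key_scalar {dd s cl : ℝ} (hc : 0 < cl) (hpos : 0 < dd * cl - s ^ 2) (y a : ℝ) :
    0 ≤ dd * y ^ 2 + 2 * s * y * a + cl * a ^ 2 ∧
      (dd * y ^ 2 + 2 * s * y * a + cl * a ^ 2 = 0 → y = 0 ∧ a = 0) := by
  have h1 : cl * (dd * y ^ 2 + 2 * s * y * a + cl * a ^ 2)
      = (cl * a + s * y) ^ 2 + (dd * cl - s ^ 2) * y ^ 2 := by ring
  constructor
  · nlinarith [sq_nonneg (cl * a + s * y), mul_nonneg hpos.le (sq_nonneg y)]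
  · intro h
    have hy2 : y ^ 2 = 0 := by
      nlinarith [sq_nonneg (cl * a + s * y), mul_nonneg hpos.le (sq_nonneg y)]
    have hy : y = 0 := pow_eq_zero_iff (two_ne_zero) |>.mp hy2
    subst hy
    have ha2 : a ^ 2 = 0 := by nlinarith
    exact ⟨rfl, pow_eq_zero_iff (two_ne_zero) |>.mp ha2⟩

lemma coeff_pos {c δ : ℝ} (hc : 0 < c) (hδ : 0 < Real.cos (2 * δ)) :
    0 < (Real.cos δ ^ 2 / c) * c - Real.sin δ ^ 2 := by
  have h2 : Real.cos (2 * δ) = 2 * Real.cos δ ^ 2 - 1 := Real.cos_two_mul δ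
  have h3 : Real.sin δ ^ 2 + Real.cos δ ^ 2 = 1 := Real.sin_sq_add_cos_sq δ
  have h4 : Real.cos δ ^ 2 / c * c = Real.cos δ ^ 2 := div_mul_cancel₀ _ hc.ne'
  nlinarith

/-- Each complex term of the quadratic form is a real number given by the
real quadratic form on real and imaginary parts. -/
lemma term_re (dd s cl : ℝ) (y a : ℂ) :
    star y * ((dd : ℂ) * y) + star y * ((s : ℂ) * a) + star a * ((s : ℂ) * y)
      + star a * ((cl : ℂ) * a)
    = ((dd * (y.re ^ 2 + y.im ^ 2) + 2 * s * (y.re * a.re + y.im * a.im)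
        + cl * (a.re ^ 2 + a.im ^ 2) : ℝ) : ℂ) := by
  apply Complex.ext <;>
    simp [Complex.mul_re, Complex.mul_im, Complex.star_def, ← Complex.ofReal_pow] <;> ring

lemma mapNeg {m n : Type*} (M : Matrix m n ℝ) :
    (-M).map (⇑Complex.ofRealHom) = -(M.map (⇑Complex.ofRealHom)) := by
  ext i j; simp

/-- If `c_l > 0` and `cos (2 δ_l) > 0` for all edges, the kernel
of the adaptive Kuramoto Jacobian `J` is exactly
`{(x, a) : Bᵀ x = 0 ∧ a = 0}`, and every nonzero (complex) eigenvalue of `J` is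
a strictly negative real number. -/
theorem adaptiveKuramotoJacobian_kernel {N L : ℕ} (B : Matrix (Fin N) (Fin L) ℝ)
    (c δ : Fin L → ℝ) (hc : ∀ l, 0 < c l) (hδ : ∀ l, 0 < Real.cos (2 * δ l)) :
    (∀ z : Fin N ⊕ Fin L → ℝ,
      (adaptiveKuramotoJacobian B c δ) *ᵥ z = 0 ↔
        (Bᵀ *ᵥ (z ∘ Sum.inl) = 0 ∧ z ∘ Sum.inr = 0)) ∧
    (∀ (μ : ℂ) (v : Fin N ⊕ Fin L → ℂ), v ≠ 0 →
      ((adaptiveKuramotoJacobian B c δ).map (fun x : ℝ => (x : ℂ))) *ᵥ v = μ • v →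
      μ ≠ 0 → ∃ r : ℝ, r < 0 ∧ μ = (r : ℂ)) := by
  have hpos : ∀ l, 0 < (Real.cos (δ l) ^ 2 / c l) * c l - Real.sin (δ l) ^ 2 :=
    fun l => coeff_pos (hc l) (hδ l)
  constructor
  · intro z
    constructor
    · intro hz
      set x := z ∘ Sum.inl with hx
      set a := z ∘ Sum.inr with ha
      have hzz : z = Sum.elim x a := (Sum.elim_comp_inl_inr z).symm
      have hBt : Bᵀᴴ = B := by
        ext i j; simp [Matrix.conjTranspose_apply]
      have hq := quad_expand B hBt (fun l => Real.cos (δ l) ^ 2 / c l)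
        (fun l => Real.sin (δ l)) c x a
      rw [← hzz] at hq
      have hz0 : star z ⬝ᵥ ((adaptiveKuramotoJacobian B c δ) *ᵥ z) = 0 := by
        rw [hz, dotProduct_zero]
      rw [adaptiveKuramotoJacobian] at hz0
      rw [hz0] at hq
      set y := Bᵀ *ᵥ x with hy
      have h0 := hq.symm
      have hsum : ∑ i, (y i * ((Real.cos (δ i) ^ 2 / c i) * y i)
          + y i * (Real.sin (δ i) * a i) + a i * (Real.sin (δ i) * y i)
          + a i * (c i * a i)) = 0 := by
        have h1 := neg_eq_zero.mp h0
        simpa [star_trivial] using h1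
      have hterm : ∀ i : Fin L, y i * ((Real.cos (δ i) ^ 2 / c i) * y i)
          + y i * (Real.sin (δ i) * a i) + a i * (Real.sin (δ i) * y i)
          + a i * (c i * a i)
          = (Real.cos (δ i) ^ 2 / c i) * (y i) ^ 2
            + 2 * Real.sin (δ i) * (y i) * (a i) + c i * (a i) ^ 2 := by
        intro i; ring
      have hnn : ∀ i ∈ Finset.univ, (0:ℝ) ≤ y i * ((Real.cos (δ i) ^ 2 / c i) * y i)
          + y i * (Real.sin (δ i) * a i) + a i * (Real.sin (δ i) * y i)
          + a i * (c i * a i) := by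
        intro i _
        rw [hterm i]
        exact (key_scalar (hc i) (hpos i) (y i) (a i)).1
      have hall := (Finset.sum_eq_zero_iff_of_nonneg hnn).mp hsum
      have hya : ∀ i : Fin L, y i = 0 ∧ a i = 0 := by
        intro i
        have := hall i (Finset.mem_univ i)
        rw [hterm i] at this
        exact (key_scalar (hc i) (hpos i) (y i) (a i)).2 this
      exact ⟨funext fun i => (hya i).1, funext fun i => (hya i).2⟩
    · rintro ⟨hx, ha⟩
      have hzz : z = Sum.elim (z ∘ Sum.inl) (z ∘ Sum.inr) := (Sum.elim_comp_inl_inr z).symm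
      have e1 : (B * Matrix.diagonal (fun l => Real.cos (δ l) ^ 2 / c l) * Bᵀ) *ᵥ
          (z ∘ Sum.inl) = 0 := by
        rw [← Matrix.mulVec_mulVec, hx, Matrix.mulVec_zero]
      have e2 : (Matrix.diagonal (fun l => Real.sin (δ l)) * Bᵀ) *ᵥ (z ∘ Sum.inl) = 0 := by
        rw [← Matrix.mulVec_mulVec, hx, Matrix.mulVec_zero]
      rw [adaptiveKuramotoJacobian, hzz, Matrix.fromBlocks_mulVec]
      simp only [Sum.elim_comp_inl, Sum.elim_comp_inr, Matrix.neg_mulVec, ha,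
        Matrix.mulVec_zero, e1, e2, neg_zero, add_zero]
      funext i; cases i <;> rfl
  · intro μ v hv hev hμ
    have hfun : (fun x : ℝ => (x : ℂ)) = ⇑Complex.ofRealHom := rfl
    set B' : Matrix (Fin N) (Fin L) ℂ := B.map (fun x : ℝ => (x : ℂ)) with hB'
    have hBt : B'ᵀᴴ = B' := by
      ext i j
      simp [hB', Matrix.conjTranspose_apply, Matrix.map_apply, Complex.conj_ofReal]
    have hJ : (adaptiveKuramotoJacobian B c δ).map (fun x : ℝ => (x : ℂ))
        = Matrix.fromBlocks
          (-(B' * Matrix.diagonal (fun l => ((Real.cos (δ l) ^ 2 / c l : ℝ) : ℂ)) * B'ᵀ))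
          (-(B' * Matrix.diagonal (fun l => ((Real.sin (δ l) : ℝ) : ℂ))))
          (-(Matrix.diagonal (fun l => ((Real.sin (δ l) : ℝ) : ℂ)) * B'ᵀ))
          (-Matrix.diagonal (fun l => ((c l : ℝ) : ℂ))) := by
      rw [adaptiveKuramotoJacobian, hfun, Matrix.fromBlocks_map]
      simp only [mapNeg, Matrix.map_mul, Matrix.transpose_map,
        Matrix.diagonal_map (map_zero _)]
      rfl
    set x := v ∘ Sum.inl with hx
    set a := v ∘ Sum.inr with ha
    have hvz : v = Sum.elim x a := (Sum.elim_comp_inl_inr v).symm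
    have hq := quad_expand B' hBt (fun l => ((Real.cos (δ l) ^ 2 / c l : ℝ) : ℂ))
      (fun l => ((Real.sin (δ l) : ℝ) : ℂ)) (fun l => ((c l : ℝ) : ℂ)) x a
    rw [← hvz] at hq
    set y := B'ᵀ *ᵥ x with hy
    set R : Fin L → ℝ := fun l =>
      (Real.cos (δ l) ^ 2 / c l) * ((y l).re ^ 2 + (y l).im ^ 2)
        + 2 * Real.sin (δ l) * ((y l).re * (a l).re + (y l).im * (a l).im)
        + c l * ((a l).re ^ 2 + (a l).im ^ 2) with hR
    have hsumR : star v ⬝ᵥ ((adaptiveKuramotoJacobian B c δ).map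
        (fun x : ℝ => (x : ℂ)) *ᵥ v) = ((-∑ l, R l : ℝ) : ℂ) := by
      rw [hJ, hq, Complex.ofReal_neg]
      congr 1
      rw [Complex.ofReal_sum]
      refine Finset.sum_congr rfl fun l _ => ?_
      have ht := term_re (Real.cos (δ l) ^ 2 / c l) (Real.sin (δ l)) (c l) (y l) (a l)
      simpa [hR] using ht
    have hRnn : ∀ l, 0 ≤ R l := by
      intro l
      have h1 := (key_scalar (hc l) (hpos l) ((y l).re) ((a l).re)).1
      have h2 := (key_scalar (hc l) (hpos l) ((y l).im) ((a l).im)).1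
      rw [hR]; dsimp only; nlinarith
    have hnorm : star v ⬝ᵥ v = ((∑ i, Complex.normSq (v i) : ℝ) : ℂ) := by
      rw [Complex.ofReal_sum]
      simp [dotProduct, Complex.normSq_eq_conj_mul_self, Complex.star_def]
    have hnpos : 0 < ∑ i, Complex.normSq (v i) := by
      obtain ⟨i, hi⟩ := Function.ne_iff.mp hv
      exact Finset.sum_pos' (fun j _ => Complex.normSq_nonneg _)
        ⟨i, Finset.mem_univ i, Complex.normSq_pos.mpr hi⟩
    set nr := ∑ i, Complex.normSq (v i) with hnr
    have heq : μ * ((nr : ℝ) : ℂ) = ((-∑ l, R l : ℝ) : ℂ) := by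
      rw [← hnorm, ← hsumR, hev, dotProduct_smul, smul_eq_mul]
    have hnrne : ((nr : ℝ) : ℂ) ≠ 0 := Complex.ofReal_ne_zero.mpr hnpos.ne'
    have hμeq : μ = (((-∑ l, R l) / nr : ℝ) : ℂ) := by
      rw [Complex.ofReal_div]
      exact (eq_div_iff hnrne).mpr heq
    have hRs : 0 ≤ ∑ l, R l := Finset.sum_nonneg fun l _ => hRnn l
    refine ⟨(-∑ l, R l) / nr, ?_, hμeq⟩
    refine lt_of_le_of_ne
      (div_nonpos_of_nonpos_of_nonneg (neg_nonpos.mpr hRs) hnpos.le) ?_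
    intro h0
    exact hμ (by rw [hμeq, h0, Complex.ofReal_zero])
end

section
/- Scalar Nyquist-type stability condition: let p be a rational function with complex coefficients that is proper (the degree of its numerator is at most the degree of its denominator) and has no poles in the closed right half-plane { s ∈ ℂ : Re(s) ≥ 0 }. Suppose that for every ω ∈ ℝ the value p(iω) is not a real number ≤ −1, and that the limit of p(s) as |s| → ∞ is also not a real number ≤ −1. Then 1 + p(s) ≠ 0 for every s ∈ ℂ with Re(s) ≥ 0. -/
open Polynomial Filter Bornology Topology

lemma aux_pow_cobounded {k : ℕ} (hk : 0 < k) :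
    Tendsto (fun s : ℂ => s ^ k) (cobounded ℂ) (cobounded ℂ) := by
  rw [← tendsto_norm_atTop_iff_cobounded]
  simp only [norm_pow]
  exact (tendsto_pow_atTop hk.ne').comp tendsto_norm_cobounded_atTop

lemma aux_eval_div_pow (P : Polynomial ℂ) (n : ℕ) (h : P.natDegree ≤ n) :
    Tendsto (fun s : ℂ => P.eval s / s ^ n) (cobounded ℂ) (𝓝 (P.coeff n)) := by
  have hev : ∀ s : ℂ, P.eval s / s ^ n
      = ∑ i ∈ Finset.range (n + 1), P.coeff i * s ^ i / s ^ n := by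
    intro s
    rw [Polynomial.eval_eq_sum_range' (Nat.lt_succ_of_le h), Finset.sum_div]
  have key : ∀ i ∈ Finset.range (n + 1),
      Tendsto (fun s : ℂ => P.coeff i * s ^ i / s ^ n) (cobounded ℂ)
        (𝓝 (if i = n then P.coeff n else 0)) := by
    intro i hi
    rcases eq_or_lt_of_le (Nat.lt_succ_iff.mp (Finset.mem_range.mp hi)) with heq | hlt
    · subst heq
      simp only [if_pos rfl]
      apply Tendsto.congr' ?_ tendsto_const_nhds
      filter_upwards [eventually_ne_cobounded (0 : ℂ)] with s hs
      rw [mul_div_assoc, div_self (pow_ne_zero _ hs), mul_one]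
      simp
    · simp only [if_neg hlt.ne]
      have h1 : Tendsto (fun s : ℂ => P.coeff i * (s ^ (n - i))⁻¹) (cobounded ℂ) (𝓝 0) := by
        have := (tendsto_inv₀_cobounded.comp (aux_pow_cobounded (k := n - i)
          (Nat.sub_pos_of_lt hlt))).const_mul (P.coeff i)
        simpa using this
      apply Tendsto.congr' ?_ h1
      filter_upwards [eventually_ne_cobounded (0 : ℂ)] with s hs
      rw [mul_div_assoc]
      congr 1
      rw [eq_div_iff (pow_ne_zero _ hs), inv_mul_eq_div, div_eq_iff (pow_ne_zero _ hs),
        ← pow_add]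
      congr 1
      omega
  have := tendsto_finset_sum _ key
  rw [Finset.sum_ite_eq' (Finset.range (n+1)) n (fun _ => P.coeff n)] at this
  simp only [Finset.self_mem_range_succ, if_pos] at this
  exact Tendsto.congr (fun s => (hev s).symm) this


/-- Scalar Nyquist-type stability condition.  If `p` is a proper
complex rational function with no poles in the closed right half-plane, whose
values on the imaginary axis are never real numbers `≤ -1`, and whose limit as
`|s| → ∞` is not a real number `≤ -1`, then `1 + p(s) ≠ 0` on the closed right
half-plane. -/
theorem scalar_nyquist_stability (p : RatFunc ℂ)
    (hproper : p.num.degree ≤ p.denom.degree)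
    (hpoles : ∀ s : ℂ, 0 ≤ s.re → p.denom.eval s ≠ 0)
    (hfreq : ∀ ω : ℝ, ¬∃ x : ℝ, x ≤ -1 ∧
      p.eval (RingHom.id ℂ) ((ω : ℂ) * Complex.I) = (x : ℂ))
    (hlim : ∀ l : ℂ,
      Tendsto (fun s : ℂ => p.eval (RingHom.id ℂ) s)
        (Filter.comap (fun s : ℂ => ‖s‖) Filter.atTop) (nhds l) →
      ¬∃ x : ℝ, x ≤ -1 ∧ l = (x : ℂ)) :
    ∀ s : ℂ, 0 ≤ s.re → 1 + p.eval (RingHom.id ℂ) s ≠ 0 := by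
  intro s₀ hs₀re h0
  set N : Polynomial ℂ := p.num with hN
  set Q : Polynomial ℂ := p.denom with hQdef
  set f : ℂ → ℂ := fun s => N.eval s / Q.eval s with hf
  have hfeq : ∀ s : ℂ, p.eval (RingHom.id ℂ) s = f s := by
    intro s
    rfl
  -- the filter
  have hFeq : Filter.comap (fun s : ℂ => ‖s‖) Filter.atTop = cobounded ℂ := by
    rw [← comap_norm_atTop]
  -- basic facts
  have hQ0 : Q ≠ 0 := p.denom_ne_zero
  set n : ℕ := Q.natDegree with hn
  have hQc : Q.coeff n ≠ 0 := by
    rw [hn, Polynomial.coeff_natDegree]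
    exact Polynomial.leadingCoeff_ne_zero.mpr hQ0
  have hNdeg : N.natDegree ≤ n := Polynomial.natDegree_le_natDegree hproper
  set l : ℂ := N.coeff n / Q.coeff n with hl
  -- the limit
  have hlimf : Tendsto f (cobounded ℂ) (𝓝 l) := by
    have hQt := aux_eval_div_pow Q n le_rfl
    have hNt := aux_eval_div_pow N n hNdeg
    have hQne : ∀ᶠ s : ℂ in cobounded ℂ, Q.eval s ≠ 0 := by
      filter_upwards [hQt.eventually_ne hQc] with s hs
      intro h
      rw [h, zero_div] at hs
      exact hs rfl
    apply Tendsto.congr' ?_ (hNt.div hQt hQc)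
    filter_upwards [hQne, eventually_ne_cobounded (0 : ℂ)] with s hs1 hs2
    simp only [Pi.div_apply]
    rw [div_div_div_cancel_right₀ (pow_ne_zero n hs2)]
  have hlimf' : Tendsto (fun s : ℂ => p.eval (RingHom.id ℂ) s)
      (Filter.comap (fun s : ℂ => ‖s‖) Filter.atTop) (𝓝 l) := by
    rw [hFeq]
    exact hlimf.congr fun s => (hfeq s).symm
  -- the forbidden ray
  set K : Set ℂ := {z : ℂ | z.im = 0 ∧ z.re ≤ -1} with hK
  have hKcl : IsClosed K :=
    (isClosed_eq Complex.continuous_im continuous_const).inter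
      (isClosed_le Complex.continuous_re continuous_const)
  have hlK : l ∉ K := by
    intro hmem
    exact hlim l hlimf' ⟨l.re, hmem.2, (Complex.ext rfl (by simp [hmem.1]))⟩
  have hfreq' : ∀ s : ℂ, s.re = 0 → f s ∉ K := by
    intro s hsre hmem
    apply hfreq s.im
    refine ⟨(f s).re, hmem.2, ?_⟩
    have hs : (s.im : ℂ) * Complex.I = s := by
      apply Complex.ext <;> simp [hsre]
    rw [hs, hfeq s]
    exact Complex.ext rfl (by simp [hmem.1])
  -- radius beyond which f avoids K
  have hev : ∀ᶠ s : ℂ in cobounded ℂ, f s ∉ K :=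
    hlimf.eventually (hKcl.isOpen_compl.mem_nhds hlK)
  rw [← comap_norm_atTop, eventually_comap] at hev
  obtain ⟨R, hR⟩ := eventually_atTop.mp hev
  have hRprop : ∀ s : ℂ, f s ∈ K → ‖s‖ ≤ R := by
    intro s hsK
    by_contra hc
    push_neg at hc
    exact hR ‖s‖ hc.le s rfl hsK
  -- the compact set D and the set of "gains" T
  set C₀ : Set ℂ := {s : ℂ | 0 ≤ s.re} ∩ Metric.closedBall 0 R with hC₀
  have hC₀cpt : IsCompact C₀ :=
    (isCompact_closedBall 0 R).inter_left (isClosed_le continuous_const Complex.continuous_re)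
  have hfcont : ContinuousOn f C₀ := by
    apply ContinuousOn.div (N.continuous_aeval.continuousOn) (Q.continuous_aeval.continuousOn)
    exact fun s hs => hpoles s hs.1
  set D : Set ℂ := C₀ ∩ f ⁻¹' K with hD
  have hDcl : IsClosed D := hfcont.preimage_isClosed_of_isClosed
    (hC₀cpt.isClosed) hKcl
  have hDcpt : IsCompact D := hC₀cpt.of_isClosed_subset hDcl Set.inter_subset_left
  have hDsub : ∀ s : ℂ, 0 ≤ s.re → f s ∈ K → s ∈ D := by
    intro s hsre hsK
    exact ⟨⟨hsre, by simpa [Complex.dist_eq] using hRprop s hsK⟩, hsK⟩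
  set T : Set ℝ := (fun s => -(f s).re - 1) '' D with hT
  have hTcpt : IsCompact T := by
    apply hDcpt.image_of_continuousOn
    exact ((Complex.continuous_re.comp_continuousOn (hfcont.mono Set.inter_subset_left)).neg).sub
      continuousOn_const
  -- 0 ∈ T
  have hfs₀ : f s₀ = -1 := by
    have := hfeq s₀
    rw [this] at h0
    linear_combination h0
  have hT0 : (0 : ℝ) ∈ T := by
    refine ⟨s₀, hDsub s₀ hs₀re ?_, ?_⟩
    · rw [hfs₀]; exact ⟨by simp, by norm_num⟩
    · show -(f s₀).re - 1 = 0
      rw [hfs₀]; norm_num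
  -- the supremum
  set t₁ : ℝ := sSup T with ht₁
  have hTne : T.Nonempty := ⟨0, hT0⟩
  have ht₁T : t₁ ∈ T := hTcpt.sSup_mem hTne
  obtain ⟨sstar, hsD, hsval⟩ := ht₁T
  have hsK : f sstar ∈ K := hsD.2
  have hcre : (f sstar).re = -1 - t₁ := by
    have h := hsval; simp only at h; linarith
  have ht₁0 : 0 ≤ t₁ := le_csSup hTcpt.bddAbove hT0
  have hcim : (f sstar).im = 0 := hsK.1
  have h01 : (0:ℝ) ≤ sstar.re := hsD.1.1
  have hsstar_re : 0 < sstar.re := by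
    rcases h01.lt_or_eq with h | h
    · exact h
    · exact absurd hsK (hfreq' sstar h.symm)
  -- analyticity at sstar
  have hQs : Q.eval sstar ≠ 0 := hpoles sstar h01
  have hanaN : AnalyticAt ℂ (fun z : ℂ => N.eval z) sstar := by
    have := N.differentiable_aeval.analyticAt sstar
    simpa using this
  have hanaQ : AnalyticAt ℂ (fun z : ℂ => Q.eval z) sstar := by
    have := Q.differentiable_aeval.analyticAt sstar
    simpa using this
  have hana : AnalyticAt ℂ f sstar := hanaN.div hanaQ hQs
  rcases hana.eventually_constant_or_nhds_le_map_nhds with hconst | hmap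
  · -- constant case : N = (f sstar) • Q identically, contradiction at 0
    have hevQ : ∀ᶠ z in 𝓝 sstar, Q.eval z ≠ 0 :=
      (Q.continuous_aeval.continuousAt (x := sstar)).eventually_ne (by simpa using hQs)
    have hroot : ∀ᶠ z in 𝓝 sstar, (N - Polynomial.C (f sstar) * Q).eval z = 0 := by
      filter_upwards [hconst, hevQ] with z h1 h2
      have : N.eval z = f sstar * Q.eval z := by
        rw [← h1]
        show N.eval z = N.eval z / Q.eval z * Q.eval z
        rw [div_mul_cancel₀ _ h2]
      simp [Polynomial.eval_sub, Polynomial.eval_mul, this]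
    have hP0 : N - Polynomial.C (f sstar) * Q = 0 := by
      apply Polynomial.eq_zero_of_infinite_isRoot
      exact infinite_of_mem_nhds sstar hroot
    have hNQ : ∀ z : ℂ, N.eval z = f sstar * Q.eval z := by
      intro z
      have := congrArg (Polynomial.eval z) hP0
      simpa [sub_eq_zero] using this
    have hQ00 : Q.eval 0 ≠ 0 := hpoles 0 (by norm_num)
    have hf0 : f 0 = f sstar := by
      rw [hf]; simp only
      rw [hNQ 0, mul_div_assoc, div_self hQ00, mul_one]
    apply hfreq 0
    refine ⟨(f sstar).re, hsK.2, ?_⟩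
    have h00 : ((0 : ℝ) : ℂ) * Complex.I = 0 := by simp
    rw [h00, hfeq 0, hf0]
    exact Complex.ext rfl (by simp [hcim])
  · -- open mapping case
    have hAnh : {z : ℂ | 0 < z.re} ∈ 𝓝 sstar :=
      (isOpen_lt continuous_const Complex.continuous_re).mem_nhds hsstar_re
    have himg : f '' {z : ℂ | 0 < z.re} ∈ 𝓝 (f sstar) := by
      apply hmap
      rw [mem_map]
      exact mem_of_superset hAnh (Set.subset_preimage_image f _)
    obtain ⟨ε, hε, hball⟩ := Metric.mem_nhds_iff.mp himg
    have hcball : ((-1 - (t₁ + ε / 2) : ℝ) : ℂ) ∈ Metric.ball (f sstar) ε := by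
      have hfs : f sstar = ((-1 - t₁ : ℝ) : ℂ) := by
        apply Complex.ext
        · simpa using hcre
        · simpa using hcim
      rw [Metric.mem_ball, hfs, Complex.dist_eq]
      have heq : ((-1 - (t₁ + ε / 2) : ℝ) : ℂ) - ((-1 - t₁ : ℝ) : ℂ)
          = ((-(ε / 2) : ℝ) : ℂ) := by
        push_cast
        ring
      rw [heq, Complex.norm_real, Real.norm_eq_abs, abs_neg, abs_of_pos (by linarith)]
      linarith
    obtain ⟨s', hs're, hfs'⟩ := hball hcball
    have hs'K : f s' ∈ K := by
      rw [hfs']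
      refine ⟨Complex.ofReal_im _, ?_⟩
      rw [Complex.ofReal_re]
      linarith
    have hs'T : -(f s').re - 1 ∈ T := ⟨s', hDsub s' (le_of_lt hs're) hs'K, rfl⟩
    have hval' : -(f s').re - 1 = t₁ + ε / 2 := by
      rw [hfs', Complex.ofReal_re]
      ring
    rw [hval'] at hs'T
    have hle : t₁ + ε / 2 ≤ t₁ := le_csSup hTcpt.bddAbove hs'T
    linarith
end

section
/- Small gain theorem, determinant form: let G and H be N×N matrices whose entries are rational functions with complex coefficients, each entry proper (numerator degree at most denominator degree) and with no poles in the closed right half-plane { s ∈ ℂ : Re(s) ≥ 0 }. Suppose that for every ω ∈ ℝ the spectral norms satisfy σ̄(G(iω)) · σ̄(H(iω)) < 1, and that the same strict inequality holds for the entrywise limit matrices G(∞), H(∞) as |s| → ∞. Then det(I + H(s) G(s)) ≠ 0 for every s ∈ ℂ with Re(s) ≥ 0. -/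
open Matrix Polynomial Filter

/-- The spectral norm (largest singular value) of a complex matrix, i.e. its
operator norm as a linear map between the corresponding finite-dimensional
ℓ² spaces. -/
noncomputable def specNorm {m n : Type*} [Fintype m] [Fintype n] [DecidableEq n]
    (A : Matrix m n ℂ) : ℝ :=
  ‖LinearMap.toContinuousLinearMap (Matrix.toEuclideanLin A)‖

/-- Entrywise evaluation of a matrix of rational functions at a point. -/
noncomputable def evalMatrix {N : ℕ} (G : Matrix (Fin N) (Fin N) (RatFunc ℂ)) (s : ℂ) :
    Matrix (Fin N) (Fin N) ℂ :=
  G.map (fun g => g.eval (RingHom.id ℂ) s)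

namespace SmallGainAux

/-- The "at infinity" filter on `ℂ`. -/
noncomputable def Linf : Filter ℂ := Filter.comap (fun s : ℂ => ‖s‖) Filter.atTop

lemma Linf_eq : Linf = Bornology.cobounded ℂ := by
  have habs : (fun s : ℂ => ‖s‖) = fun s : ℂ => ‖s‖ := by
    funext s
    rfl
  rw [Linf, habs, comap_norm_atTop]

lemma Linf_le_cobounded : Linf ≤ Bornology.cobounded ℂ := Linf_eq.le

lemma tendsto_norm_Linf : Tendsto (fun s : ℂ => ‖s‖) Linf atTop := by
  have h : Tendsto (fun s : ℂ => ‖s‖) Linf atTop := tendsto_comap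
  simpa using h

lemma eventually_ne_zero : ∀ᶠ s : ℂ in Linf, s ≠ 0 := by
  filter_upwards [tendsto_norm_Linf.eventually_ge_atTop 1] with s hs
  intro h
  rw [h, norm_zero] at hs
  linarith

lemma tendsto_eval_div_pow (p : ℂ[X]) (d : ℕ) (hp : p.natDegree ≤ d) :
    Tendsto (fun s : ℂ => p.eval s / s ^ d) Linf (nhds (p.coeff d)) := by
  have hterm : ∀ i ∈ Finset.range (d + 1),
      Tendsto (fun s : ℂ => p.coeff i * (s ^ i / s ^ d)) Linf
        (nhds (if i = d then p.coeff d else 0)) := by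
    intro i hi
    rcases eq_or_ne i d with rfl | hid
    · rw [if_pos rfl]
      refine Tendsto.congr' ?_ tendsto_const_nhds
      filter_upwards [eventually_ne_zero] with s hs
      rw [div_self (pow_ne_zero _ hs), mul_one]
    · rw [if_neg hid]
      have hlt : i < d := lt_of_le_of_ne (Nat.lt_succ_iff.mp (Finset.mem_range.mp hi)) hid
      have h0 : Tendsto (fun s : ℂ => (s ^ (d - i))⁻¹) Linf (nhds 0) := by
        rw [tendsto_zero_iff_norm_tendsto_zero]
        have hpow : Tendsto (fun s : ℂ => ‖s‖ ^ (d - i)) Linf atTop :=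
          (tendsto_pow_atTop (by omega)).comp tendsto_norm_Linf
        simpa [norm_inv, norm_pow, Function.comp_def] using tendsto_inv_atTop_zero.comp hpow
      have h1 : Tendsto (fun s : ℂ => s ^ i / s ^ d) Linf (nhds 0) := by
        refine Tendsto.congr' ?_ h0
        filter_upwards [eventually_ne_zero] with s hs
        have hd : s ^ d = s ^ i * s ^ (d - i) := by
          rw [← pow_add]; congr 1; omega
        rw [hd]
        field_simp
      simpa using h1.const_mul (p.coeff i)
  have hsum := tendsto_finset_sum (Finset.range (d + 1)) hterm
  have hval : (∑ i ∈ Finset.range (d + 1), if i = d then p.coeff d else 0) = p.coeff d := by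
    simp
  rw [hval] at hsum
  refine Tendsto.congr (fun s => ?_) hsum
  rw [eval_eq_sum_range' (Nat.lt_succ_of_le hp), Finset.sum_div]
  congr 1
  ext i
  ring

lemma eval_eq (g : RatFunc ℂ) (s : ℂ) :
    g.eval (RingHom.id ℂ) s = g.num.eval s / g.denom.eval s := rfl

lemma tendsto_ratfunc_eval (g : RatFunc ℂ) (hg : g.num.degree ≤ g.denom.degree) :
    Tendsto (fun s : ℂ => g.eval (RingHom.id ℂ) s) Linf
      (nhds (g.num.coeff g.denom.natDegree / g.denom.leadingCoeff)) := by
  set d := g.denom.natDegree with hd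
  have hden0 : g.denom ≠ 0 := g.denom_ne_zero
  have hlc : g.denom.leadingCoeff ≠ 0 := leadingCoeff_ne_zero.mpr hden0
  have hnd : g.num.natDegree ≤ d := natDegree_le_natDegree hg
  have hnum := tendsto_eval_div_pow g.num d hnd
  have hden := tendsto_eval_div_pow g.denom d le_rfl
  have hcoef : g.denom.coeff d = g.denom.leadingCoeff := rfl
  rw [hcoef] at hden
  have hdiv := hnum.div hden hlc
  refine Tendsto.congr' ?_ hdiv
  filter_upwards [eventually_ne_zero, hden.eventually_ne hlc] with s hs hds
  have h1 : g.denom.eval s ≠ 0 := by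
    intro h
    apply hds
    rw [h, zero_div]
  rw [eval_eq]
  have hsd : (s : ℂ) ^ d ≠ 0 := pow_ne_zero _ hs
  simp only [Pi.div_apply]
  field_simp

lemma diffAt_eval (g : RatFunc ℂ) (s : ℂ) (h : g.denom.eval s ≠ 0) :
    DifferentiableAt ℂ (fun z => g.eval (RingHom.id ℂ) z) s := by
  have : (fun z => g.eval (RingHom.id ℂ) z) = fun z => g.num.eval z / g.denom.eval z := rfl
  rw [this]
  exact (g.num.differentiableAt).div (g.denom.differentiableAt) h

end SmallGainAux

section MainAux

variable {N : ℕ}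

lemma specNorm_continuous :
    Continuous (fun A : Matrix (Fin N) (Fin N) ℂ => specNorm A) := by
  have h : Continuous fun A : Matrix (Fin N) (Fin N) ℂ =>
      LinearMap.toContinuousLinearMap (Matrix.toEuclideanLin A) :=
    LinearMap.continuous_of_finiteDimensional
      ((LinearMap.toContinuousLinearMap :
          (EuclideanSpace ℂ (Fin N) →ₗ[ℂ] EuclideanSpace ℂ (Fin N)) ≃ₗ[ℂ]
          (EuclideanSpace ℂ (Fin N) →L[ℂ] EuclideanSpace ℂ (Fin N))).toLinearMap.comp
        (Matrix.toEuclideanLin (𝕜 := ℂ) (m := Fin N) (n := Fin N)).toLinearMap)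
  exact h.norm

lemma specNorm_apply_le (A : Matrix (Fin N) (Fin N) ℂ) (w : EuclideanSpace ℂ (Fin N)) :
    ‖Matrix.toEuclideanLin A w‖ ≤ specNorm A * ‖w‖ := by
  have h := (LinearMap.toContinuousLinearMap (Matrix.toEuclideanLin A)).le_opNorm w
  exact h

lemma toEuclideanLin_mul (A B : Matrix (Fin N) (Fin N) ℂ) (w : EuclideanSpace ℂ (Fin N)) :
    Matrix.toEuclideanLin (A * B) w = Matrix.toEuclideanLin A (Matrix.toEuclideanLin B w) := by
  simp [Matrix.toEuclideanLin_apply, Matrix.mulVec_mulVec]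

/-- The scalar test function used in the Phragmén–Lindelöf argument. -/
noncomputable def phiFun (G H : Matrix (Fin N) (Fin N) (RatFunc ℂ)) (v : Fin N → ℂ) (s : ℂ) : ℂ :=
  ∑ i, (starRingEnd ℂ) (v i) *
    ∑ j, (∑ k, (H i k).eval (RingHom.id ℂ) s * (G k j).eval (RingHom.id ℂ) s) * v j

lemma phiFun_eq (G H : Matrix (Fin N) (Fin N) (RatFunc ℂ)) (v : Fin N → ℂ) (s : ℂ) :
    phiFun G H v s =
      ∑ i, (starRingEnd ℂ) (v i) * ((evalMatrix H s * evalMatrix G s) *ᵥ v) i := by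
  simp [phiFun, Matrix.mulVec, dotProduct, Matrix.mul_apply, evalMatrix]

lemma phiFun_inner (G H : Matrix (Fin N) (Fin N) (RatFunc ℂ)) (v : Fin N → ℂ) (s : ℂ) :
    phiFun G H v s =
      (inner ℂ ((WithLp.equiv 2 (Fin N → ℂ)).symm v)
        (Matrix.toEuclideanLin (evalMatrix H s * evalMatrix G s)
          ((WithLp.equiv 2 (Fin N → ℂ)).symm v)) : ℂ) := by
  rw [phiFun_eq, WithLp.equiv_symm_apply, Matrix.toEuclideanLin_apply_piLp_toLp]
  simp [PiLp.inner_apply, RCLike.inner_apply]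
  exact Finset.sum_congr rfl fun _ _ => mul_comm _ _

end MainAux

open SmallGainAux in
/-- Small gain theorem, determinant form.  If `G` and `H` are
square matrices of proper rational functions without poles in the closed right
half-plane, the product of spectral norms `σ̄(G(iω)) σ̄(H(iω))` is `< 1` for all
real `ω`, and the same holds for the entrywise limits at `∞`, then
`det (I + H(s) G(s)) ≠ 0` on the closed right half-plane. -/
theorem small_gain_theorem_det {N : ℕ} (G H : Matrix (Fin N) (Fin N) (RatFunc ℂ))
    (hGproper : ∀ i j, (G i j).num.degree ≤ (G i j).denom.degree)
    (hHproper : ∀ i j, (H i j).num.degree ≤ (H i j).denom.degree)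
    (hGpoles : ∀ i j, ∀ s : ℂ, 0 ≤ s.re → (G i j).denom.eval s ≠ 0)
    (hHpoles : ∀ i j, ∀ s : ℂ, 0 ≤ s.re → (H i j).denom.eval s ≠ 0)
    (hgain : ∀ ω : ℝ,
      specNorm (evalMatrix G ((ω : ℂ) * Complex.I)) *
        specNorm (evalMatrix H ((ω : ℂ) * Complex.I)) < 1)
    (hgain_inf : ∀ Ginf Hinf : Matrix (Fin N) (Fin N) ℂ,
      (∀ i j, Tendsto (fun s : ℂ => (G i j).eval (RingHom.id ℂ) s)
        (Filter.comap (fun s : ℂ => ‖s‖) Filter.atTop) (nhds (Ginf i j))) →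
      (∀ i j, Tendsto (fun s : ℂ => (H i j).eval (RingHom.id ℂ) s)
        (Filter.comap (fun s : ℂ => ‖s‖) Filter.atTop) (nhds (Hinf i j))) →
      specNorm Ginf * specNorm Hinf < 1) :
    ∀ s : ℂ, 0 ≤ s.re → (1 + evalMatrix H s * evalMatrix G s).det ≠ 0 := by
  classical
  -- the limit matrices at infinity
  set Ginf : Matrix (Fin N) (Fin N) ℂ :=
    fun i j => (G i j).num.coeff (G i j).denom.natDegree / (G i j).denom.leadingCoeff with hGinf
  set Hinf : Matrix (Fin N) (Fin N) ℂ :=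
    fun i j => (H i j).num.coeff (H i j).denom.natDegree / (H i j).denom.leadingCoeff with hHinf
  have hGlim : ∀ i j, Tendsto (fun s : ℂ => (G i j).eval (RingHom.id ℂ) s) Linf
      (nhds (Ginf i j)) := fun i j => tendsto_ratfunc_eval (G i j) (hGproper i j)
  have hHlim : ∀ i j, Tendsto (fun s : ℂ => (H i j).eval (RingHom.id ℂ) s) Linf
      (nhds (Hinf i j)) := fun i j => tendsto_ratfunc_eval (H i j) (hHproper i j)
  have hL1 : specNorm Ginf * specNorm Hinf < 1 := hgain_inf Ginf Hinf hGlim hHlim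
  set L1 : ℝ := specNorm Ginf * specNorm Hinf with hL1def
  have hL1nonneg : 0 ≤ L1 := mul_nonneg (norm_nonneg _) (norm_nonneg _)
  -- matrix-valued limits
  have hGmat : Tendsto (fun s : ℂ => evalMatrix G s) Linf (nhds Ginf) := by
    refine tendsto_pi_nhds.mpr ?_
    intro i
    rw [tendsto_pi_nhds]
    intro j
    exact hGlim i j
  have hHmat : Tendsto (fun s : ℂ => evalMatrix H s) Linf (nhds Hinf) := by
    refine tendsto_pi_nhds.mpr ?_
    intro i
    rw [tendsto_pi_nhds]
    intro j
    exact hHlim i j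
  -- the gain function on the imaginary axis
  set f : ℝ → ℝ := fun ω =>
    specNorm (evalMatrix G ((ω : ℂ) * Complex.I)) *
      specNorm (evalMatrix H ((ω : ℂ) * Complex.I)) with hfdef
  have axis_re : ∀ ω : ℝ, ((ω : ℂ) * Complex.I).re = 0 := by
    intro ω; simp
  -- tendsto of the axis to infinity
  have haxis_top : Tendsto (fun ω : ℝ => (ω : ℂ) * Complex.I) atTop Linf := by
    rw [Linf, tendsto_comap_iff]
    have : ((fun s : ℂ => ‖s‖) ∘ fun ω : ℝ => (ω : ℂ) * Complex.I) =
        fun ω : ℝ => |ω| := by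
      funext ω; simp [_root_.map_mul]
    rw [this]
    exact tendsto_abs_atTop_atTop
  have haxis_bot : Tendsto (fun ω : ℝ => (ω : ℂ) * Complex.I) atBot Linf := by
    rw [Linf, tendsto_comap_iff]
    have : ((fun s : ℂ => ‖s‖) ∘ fun ω : ℝ => (ω : ℂ) * Complex.I) =
        fun ω : ℝ => |ω| := by
      funext ω; simp [_root_.map_mul]
    rw [this]
    exact tendsto_abs_atBot_atTop
  have hf_lim : ∀ l : Filter ℝ, Tendsto (fun ω : ℝ => (ω : ℂ) * Complex.I) l Linf →
      Tendsto f l (nhds L1) := by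
    intro l hl
    exact (((specNorm_continuous.tendsto Ginf).comp (hGmat.comp hl)).mul
      ((specNorm_continuous.tendsto Hinf).comp (hHmat.comp hl)))
  -- continuity of f
  have hf_cont : Continuous f := by
    have hbase : Continuous fun ω : ℝ => (ω : ℂ) * Complex.I :=
      Complex.continuous_ofReal.mul continuous_const
    have hGc : Continuous fun ω : ℝ => evalMatrix G ((ω : ℂ) * Complex.I) := by
      apply continuous_matrix
      intro i j
      have : (fun ω : ℝ => evalMatrix G ((ω : ℂ) * Complex.I) i j) =
          fun ω : ℝ => (G i j).num.eval ((ω : ℂ) * Complex.I) /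
            (G i j).denom.eval ((ω : ℂ) * Complex.I) := rfl
      rw [this]
      exact (((G i j).num.continuous).comp hbase).div
        (((G i j).denom.continuous).comp hbase)
        (fun ω => hGpoles i j _ (le_of_eq (axis_re ω).symm))
    have hHc : Continuous fun ω : ℝ => evalMatrix H ((ω : ℂ) * Complex.I) := by
      apply continuous_matrix
      intro i j
      have : (fun ω : ℝ => evalMatrix H ((ω : ℂ) * Complex.I) i j) =
          fun ω : ℝ => (H i j).num.eval ((ω : ℂ) * Complex.I) /
            (H i j).denom.eval ((ω : ℂ) * Complex.I) := rfl
      rw [this]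
      exact (((H i j).num.continuous).comp hbase).div
        (((H i j).denom.continuous).comp hbase)
        (fun ω => hHpoles i j _ (le_of_eq (axis_re ω).symm))
    exact (specNorm_continuous.comp hGc).mul (specNorm_continuous.comp hHc)
  -- a uniform bound c < 1 for f
  obtain ⟨c, hc1, hc⟩ : ∃ c : ℝ, c < 1 ∧ ∀ ω : ℝ, f ω ≤ c := by
    set c₁ : ℝ := (1 + L1) / 2 with hc₁def
    have hL1c₁ : L1 < c₁ := by rw [hc₁def]; linarith
    have hc₁1 : c₁ < 1 := by rw [hc₁def]; linarith
    have htop := (hf_lim atTop haxis_top).eventually_le_const hL1c₁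
    have hbot := (hf_lim atBot haxis_bot).eventually_le_const hL1c₁
    obtain ⟨a, ha⟩ := eventually_atTop.mp htop
    obtain ⟨b, hb⟩ := eventually_atBot.mp hbot
    by_cases hba : b ≤ a
    · obtain ⟨ω₀, hω₀mem, hω₀max⟩ :=
        isCompact_Icc.exists_isMaxOn (Set.nonempty_Icc.mpr hba) hf_cont.continuousOn
      refine ⟨max c₁ (f ω₀), max_lt hc₁1 (hgain ω₀), fun ω => ?_⟩
      rcases le_or_gt ω a with h1 | h1
      · rcases le_or_gt b ω with h2 | h2
        · exact le_max_of_le_right (hω₀max ⟨h2, h1⟩)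
        · exact le_max_of_le_left (hb ω h2.le)
      · exact le_max_of_le_left (ha ω h1.le)
    · refine ⟨c₁, hc₁1, fun ω => ?_⟩
      rcases le_or_gt ω b with h1 | h1
      · exact hb ω h1
      · have : a ≤ ω := by linarith [lt_of_not_ge hba]
        exact ha ω this
  have hc0 : 0 ≤ c := le_trans (mul_nonneg (norm_nonneg _) (norm_nonneg _)) (hc 0)
  -- main argument
  intro s₀ hs₀ hdet
  obtain ⟨v, hv0, hv⟩ := (Matrix.exists_mulVec_eq_zero_iff).mpr hdet
  set u : EuclideanSpace ℂ (Fin N) := (WithLp.equiv 2 (Fin N → ℂ)).symm v with hudef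
  have hu0 : u ≠ 0 := by
    intro h
    exact hv0 ((WithLp.equiv 2 (Fin N → ℂ)).symm.injective (h.trans rfl))
  have hunorm : 0 < ‖u‖ := norm_pos_iff.mpr hu0
  set φ : ℂ → ℂ := phiFun G H v with hφdef
  -- φ is differentiable on the closed right half-plane
  have hφdiff : ∀ s : ℂ, 0 ≤ s.re → DifferentiableAt ℂ φ s := by
    intro s hs
    rw [hφdef]
    apply DifferentiableAt.fun_sum
    intro i _
    apply DifferentiableAt.const_mul
    apply DifferentiableAt.fun_sum
    intro j _
    apply DifferentiableAt.mul_const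
    apply DifferentiableAt.fun_sum
    intro k _
    exact (diffAt_eval (H i k) s (hHpoles i k s hs)).mul
      (diffAt_eval (G k j) s (hGpoles k j s hs))
  -- limit of φ at infinity
  have hφlim : ∃ w : ℂ, Tendsto φ Linf (nhds w) := by
    refine ⟨∑ i, (starRingEnd ℂ) (v i) * ∑ j, (∑ k, Hinf i k * Ginf k j) * v j, ?_⟩
    rw [hφdef]
    apply tendsto_finset_sum
    intro i _
    apply Tendsto.const_mul
    apply tendsto_finset_sum
    intro j _
    apply Tendsto.mul_const
    apply tendsto_finset_sum
    intro k _
    exact (hHlim i k).mul (hGlim k j)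
  obtain ⟨w, hw⟩ := hφlim
  -- the bound on the imaginary axis
  set C : ℝ := c * (‖u‖ * ‖u‖) with hCdef
  have hbound : ∀ s : ℂ,
      ‖φ s‖ ≤ ‖u‖ * (specNorm (evalMatrix H s) * (specNorm (evalMatrix G s) * ‖u‖)) := by
    intro s
    rw [hφdef, phiFun_inner G H v s]
    calc ‖(inner ℂ u (Matrix.toEuclideanLin (evalMatrix H s * evalMatrix G s) u) : ℂ)‖
        ≤ ‖u‖ * ‖Matrix.toEuclideanLin (evalMatrix H s * evalMatrix G s) u‖ :=
          norm_inner_le_norm _ _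
      _ ≤ ‖u‖ * (specNorm (evalMatrix H s) * (specNorm (evalMatrix G s) * ‖u‖)) := by
          apply mul_le_mul_of_nonneg_left _ (norm_nonneg u)
          rw [toEuclideanLin_mul]
          calc ‖Matrix.toEuclideanLin (evalMatrix H s)
                (Matrix.toEuclideanLin (evalMatrix G s) u)‖
              ≤ specNorm (evalMatrix H s) * ‖Matrix.toEuclideanLin (evalMatrix G s) u‖ :=
                specNorm_apply_le _ _
            _ ≤ specNorm (evalMatrix H s) * (specNorm (evalMatrix G s) * ‖u‖) := by
                exact mul_le_mul_of_nonneg_left (specNorm_apply_le _ _) (norm_nonneg _)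
  have him : ∀ ω : ℝ, ‖φ ((ω : ℂ) * Complex.I)‖ ≤ C := by
    intro ω
    refine le_trans (hbound _) ?_
    rw [hCdef]
    have h1 := hc ω
    rw [hfdef] at h1
    have hg1 : 0 ≤ specNorm (evalMatrix G ((ω : ℂ) * Complex.I)) := norm_nonneg _
    have hg2 : 0 ≤ specNorm (evalMatrix H ((ω : ℂ) * Complex.I)) := norm_nonneg _
    have h1' : specNorm (evalMatrix G ((ω : ℂ) * Complex.I)) *
        specNorm (evalMatrix H ((ω : ℂ) * Complex.I)) ≤ c := h1
    nlinarith [mul_le_mul_of_nonneg_right h1'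
      (mul_nonneg (norm_nonneg u) (norm_nonneg u))]
  -- Phragmén–Lindelöf
  have hPL : ‖φ s₀‖ ≤ C := by
    apply PhragmenLindelof.right_half_plane_of_bounded_on_real
    · constructor
      · intro s hs
        exact (hφdiff s (le_of_lt (show 0 < s.re from hs))).differentiableWithinAt
      · have hsub : closure {z : ℂ | 0 < z.re} ⊆ {z : ℂ | 0 ≤ z.re} :=
          closure_minimal (fun z hz => show 0 ≤ z.re from le_of_lt hz)
            (isClosed_le continuous_const Complex.continuous_re)
        intro s hs
        exact ((hφdiff s (hsub hs)).continuousAt).continuousWithinAt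
    · refine ⟨1, one_lt_two, 0, ?_⟩
      have hO : φ =O[Linf] (fun _ : ℂ => (1 : ℝ)) := hw.isBigO_one ℝ
      have hO2 : φ =O[Bornology.cobounded ℂ ⊓ Filter.principal {z : ℂ | 0 < z.re}]
          (fun _ : ℂ => (1 : ℝ)) :=
        hO.mono (le_trans inf_le_left Linf_eq.ge)
      refine hO2.trans (Asymptotics.isBigO_of_le _ fun z => ?_)
      simp [Real.exp_zero]
    · have hcoer : Tendsto (fun x : ℝ => (x : ℂ)) atTop Linf := by
        rw [Linf, tendsto_comap_iff]
        have : ((fun s : ℂ => ‖s‖) ∘ fun x : ℝ => (x : ℂ)) = fun x : ℝ => |x| := by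
          funext x; simp
        rw [this]
        exact tendsto_abs_atTop_atTop
      exact ((hw.comp hcoer).norm).isBoundedUnder_le
    · exact him
    · exact hs₀
  -- compute φ s₀
  have hmv : (evalMatrix H s₀ * evalMatrix G s₀) *ᵥ v = -v := by
    have h1 : (1 + evalMatrix H s₀ * evalMatrix G s₀) *ᵥ v =
        v + (evalMatrix H s₀ * evalMatrix G s₀) *ᵥ v := by
      rw [Matrix.add_mulVec, Matrix.one_mulVec]
    rw [h1] at hv
    linear_combination (norm := module) hv
  have hφs₀ : ‖φ s₀‖ = ‖u‖ ^ 2 := by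
    rw [hφdef, phiFun_inner G H v s₀, WithLp.equiv_symm_apply, Matrix.toEuclideanLin_apply_piLp_toLp, hmv]
    have hneg : WithLp.toLp 2 (-v) = -u := rfl
    rw [hneg, inner_neg_right, norm_neg]
    rw [show WithLp.toLp 2 v = u from rfl]
    rw [inner_self_eq_norm_sq_to_K (𝕜 := ℂ) u]
    rw [norm_pow]
    simp
  rw [hφs₀, hCdef, pow_two] at hPL
  nlinarith [mul_lt_mul_of_pos_right hc1 (mul_pos hunorm hunorm)]
end

section
/- Matrix small phase lemma: let A and B be complex n×n matrices, and let α₁ ≤ β₁ and α₂ ≤ β₂ be real numbers with β₁ − α₁ < π, β₂ − α₂ < π, β₁ + β₂ < π, and α₁ + α₂ > −π. Suppose that for every nonzero z ∈ ℂ^n, z† A z ∈ { r e^{iθ} : r > 0, θ ∈ [α₁, β₁] } and z† B z ∈ { r e^{iθ} : r > 0, θ ∈ [α₂, β₂] }. Then det(I + A B) ≠ 0. -/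
open Matrix Real

/-- Matrix small phase lemma.  If `A` and `B` are sectorial with
phase sectors `[α₁, β₁]` and `[α₂, β₂]` of width less than `π`, and
`β₁ + β₂ < π`, `α₁ + α₂ > -π`, then `det (I + A B) ≠ 0`. -/
theorem matrix_small_phase_lemma {n : ℕ} (A B : Matrix (Fin n) (Fin n) ℂ)
    (α₁ β₁ α₂ β₂ : ℝ) (h₁ : α₁ ≤ β₁) (h₂ : α₂ ≤ β₂)
    (hw₁ : β₁ - α₁ < π) (hw₂ : β₂ - α₂ < π)
    (hsum₁ : β₁ + β₂ < π) (hsum₂ : -π < α₁ + α₂)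
    (hA : ∀ z : Fin n → ℂ, z ≠ 0 → ∃ r θ : ℝ, 0 < r ∧ θ ∈ Set.Icc α₁ β₁ ∧
      star z ⬝ᵥ (A *ᵥ z) = (r : ℂ) * Complex.exp ((θ : ℂ) * Complex.I))
    (hB : ∀ z : Fin n → ℂ, z ≠ 0 → ∃ r θ : ℝ, 0 < r ∧ θ ∈ Set.Icc α₂ β₂ ∧
      star z ⬝ᵥ (B *ᵥ z) = (r : ℂ) * Complex.exp ((θ : ℂ) * Complex.I)) :
    (1 + A * B).det ≠ 0 := by
  intro hdet
  obtain ⟨z, hz0, hz⟩ := Matrix.exists_mulVec_eq_zero_iff.2 hdet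
  set w := B *ᵥ z with hw
  have hzw : z + A *ᵥ w = 0 := by
    rw [hw, Matrix.mulVec_mulVec]
    simpa [Matrix.add_mulVec] using hz
  have hAw : A *ᵥ w = -z := by
    have := hzw
    linear_combination (norm := module) this
  have hw0 : w ≠ 0 := by
    intro h
    apply hz0
    have : A *ᵥ w = 0 := by simp [h]
    rw [hAw] at this
    simpa using (neg_eq_zero.mp this)
  obtain ⟨r₁, θ₁, hr₁, hθ₁, hEq₁⟩ := hA w hw0
  obtain ⟨r₂, θ₂, hr₂, hθ₂, hEq₂⟩ := hB z hz0
  -- star w ⬝ᵥ z = conj (star z ⬝ᵥ w)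
  have hconj : star w ⬝ᵥ z = star (star z ⬝ᵥ w) := star_dotProduct _ _
  have hkey : (r₁ : ℂ) * Complex.exp ((θ₁ : ℂ) * Complex.I)
      = -((r₂ : ℂ) * Complex.exp (-(θ₂ : ℂ) * Complex.I)) := by
    have h1 : star w ⬝ᵥ (A *ᵥ w) = -(star w ⬝ᵥ z) := by
      rw [hAw]; simp [dotProduct, Finset.sum_neg_distrib, mul_neg]
    rw [hEq₁] at h1
    rw [hconj, hw, hEq₂] at h1
    rw [h1]
    congr 1
    rw [star_mul']
    simp only [Complex.star_def, Complex.conj_ofReal, ← Complex.exp_conj]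
    congr 1
    rw [_root_.map_mul, Complex.conj_ofReal, Complex.conj_I]
    ring
  have hmul : (r₁ : ℂ) * Complex.exp (((θ₁ + θ₂ : ℝ) : ℂ) * Complex.I) = -(r₂ : ℂ) := by
    have := congrArg (· * Complex.exp ((θ₂ : ℂ) * Complex.I)) hkey
    rw [mul_assoc, ← Complex.exp_add] at this
    rw [neg_mul, mul_assoc, ← Complex.exp_add] at this
    have h2 : -(θ₂ : ℂ) * Complex.I + (θ₂ : ℂ) * Complex.I = 0 := by ring
    rw [h2, Complex.exp_zero, mul_one] at this
    convert this using 3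
    push_cast
    ring
  have him : r₁ * Real.sin (θ₁ + θ₂) = 0 := by
    have := congrArg Complex.im hmul
    simp only [Complex.mul_im, Complex.ofReal_re, Complex.ofReal_im,
      Complex.exp_ofReal_mul_I_im, Complex.exp_ofReal_mul_I_re, Complex.neg_im,
      neg_zero, zero_mul, mul_zero, add_zero, zero_add] at this
    exact this
  have hre : r₁ * Real.cos (θ₁ + θ₂) = -r₂ := by
    have := congrArg Complex.re hmul
    simp only [Complex.mul_re, Complex.ofReal_re, Complex.ofReal_im,
      Complex.exp_ofReal_mul_I_im, Complex.exp_ofReal_mul_I_re, Complex.neg_re,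
      zero_mul, mul_zero, sub_zero] at this
    exact this
  have hsin : Real.sin (θ₁ + θ₂) = 0 := by
    rcases mul_eq_zero.mp him with h | h
    · exact absurd h hr₁.ne'
    · exact h
  have hlt : θ₁ + θ₂ < π := lt_of_le_of_lt (add_le_add hθ₁.2 hθ₂.2) hsum₁
  have hgt : -π < θ₁ + θ₂ := lt_of_lt_of_le hsum₂ (add_le_add hθ₁.1 hθ₂.1)
  have hzero : θ₁ + θ₂ = 0 := (Real.sin_eq_zero_iff_of_lt_of_lt hgt hlt).mp hsin
  rw [hzero, Real.cos_zero, mul_one] at hre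
  linarith
end

section
/- Phase bound for products of sectorial matrices: let A and B be complex n×n matrices, and let α₁ ≤ β₁ and α₂ ≤ β₂ be real numbers with β₁ − α₁ < π and β₂ − α₂ < π. Suppose that for every nonzero z ∈ ℂ^n, z† A z ∈ { r e^{iθ} : r > 0, θ ∈ [α₁, β₁] } and z† B z ∈ { r e^{iθ} : r > 0, θ ∈ [α₂, β₂] }. Then every eigenvalue λ of the product A B is nonzero and lies in the sector { r e^{iθ} : r > 0, θ ∈ [α₁ + α₂, β₁ + β₂] }. -/
open Matrix Real

/-- Phase bound for products of sectorial matrices.  If `A` and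
`B` are sectorial with phase sectors `[α₁, β₁]` and `[α₂, β₂]` of width less
than `π`, then every eigenvalue of `A B` is nonzero and lies in the sector
`{ r e^{iθ} : r > 0, θ ∈ [α₁ + α₂, β₁ + β₂] }`. -/
theorem eigenvalue_product_sector {n : ℕ} (A B : Matrix (Fin n) (Fin n) ℂ)
    (α₁ β₁ α₂ β₂ : ℝ) (h₁ : α₁ ≤ β₁) (h₂ : α₂ ≤ β₂)
    (hw₁ : β₁ - α₁ < π) (hw₂ : β₂ - α₂ < π)
    (hA : ∀ z : Fin n → ℂ, z ≠ 0 → ∃ r θ : ℝ, 0 < r ∧ θ ∈ Set.Icc α₁ β₁ ∧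
      star z ⬝ᵥ (A *ᵥ z) = (r : ℂ) * Complex.exp ((θ : ℂ) * Complex.I))
    (hB : ∀ z : Fin n → ℂ, z ≠ 0 → ∃ r θ : ℝ, 0 < r ∧ θ ∈ Set.Icc α₂ β₂ ∧
      star z ⬝ᵥ (B *ᵥ z) = (r : ℂ) * Complex.exp ((θ : ℂ) * Complex.I)) :
    ∀ (μ : ℂ) (z : Fin n → ℂ), z ≠ 0 → (A * B) *ᵥ z = μ • z →
      μ ≠ 0 ∧ ∃ r θ : ℝ, 0 < r ∧ θ ∈ Set.Icc (α₁ + α₂) (β₁ + β₂) ∧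
        μ = (r : ℂ) * Complex.exp ((θ : ℂ) * Complex.I) := by

  intro μ z hz heig
  set w := B *ᵥ z with hw
  obtain ⟨r₂, θ₂, hr₂, hθ₂, hB'⟩ := hB z hz
  have hexp2 : ((r₂ : ℂ) * Complex.exp ((θ₂ : ℂ) * Complex.I)) ≠ 0 :=
    mul_ne_zero (by exact_mod_cast hr₂.ne') (Complex.exp_ne_zero _)
  have hw0 : w ≠ 0 := by
    intro h
    rw [← hw, h] at hB'
    simp at hB'
    exact hr₂.ne' hB'
  obtain ⟨r₁, θ₁, hr₁, hθ₁, hA'⟩ := hA w hw0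
  have hAw : A *ᵥ w = μ • z := by
    rw [hw, Matrix.mulVec_mulVec, heig]
  have hc : star w ⬝ᵥ z = starRingEnd ℂ (star z ⬝ᵥ w) := by
    simp [dotProduct, Pi.star_apply, map_sum, mul_comm]
  have key : (r₁ : ℂ) * Complex.exp ((θ₁ : ℂ) * Complex.I)
      = μ * ((r₂ : ℂ) * Complex.exp (-((θ₂ : ℂ) * Complex.I))) := by
    rw [← hA', hAw, dotProduct_smul, smul_eq_mul, hc, hw, hB']
    simp [← Complex.exp_conj]
  have hne : ((r₂ : ℂ) * Complex.exp (-((θ₂ : ℂ) * Complex.I))) ≠ 0 :=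
    mul_ne_zero (by exact_mod_cast hr₂.ne') (Complex.exp_ne_zero _)
  have hμ : μ = ((r₁ / r₂ : ℝ) : ℂ) * Complex.exp (((θ₁ + θ₂ : ℝ) : ℂ) * Complex.I) := by
    have h2 : (r₂ : ℂ) ≠ 0 := by exact_mod_cast hr₂.ne'
    have hx : ((r₁ / r₂ : ℝ) : ℂ) * Complex.exp (((θ₁ + θ₂ : ℝ) : ℂ) * Complex.I)
        * ((r₂ : ℂ) * Complex.exp (-((θ₂ : ℂ) * Complex.I)))
        = (r₁ : ℂ) * Complex.exp ((θ₁ : ℂ) * Complex.I) := by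
      push_cast
      rw [add_mul, Complex.exp_add, Complex.exp_neg]
      have he : Complex.exp ((θ₂ : ℂ) * Complex.I) ≠ 0 := Complex.exp_ne_zero _
      field_simp
    exact mul_right_cancel₀ hne (key.symm.trans hx.symm)
  refine ⟨?_, r₁ / r₂, θ₁ + θ₂, div_pos hr₁ hr₂,
    ⟨add_le_add hθ₁.1 hθ₂.1, add_le_add hθ₁.2 hθ₂.2⟩, hμ⟩
  rw [hμ]
  exact mul_ne_zero (by exact_mod_cast (div_pos hr₁ hr₂).ne') (Complex.exp_ne_zero _)
end
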